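/- arXiv:2403.16413 — 4 statements merged into one kernel-verified Lean document; each statement's English description precedes it below -/
import Mathlib

section
/- Let α ∈ (0,1). Every measurable test ψ : ℝ → [0,1] with size ∫ψ dμ_0 ≤ α satisfies, for every h ≤ 0, ∫ψ dμ_h ≤ 1 − (1 − α)·e^{h/λ}. (That is, 1 − (1 − α)·e^{h/λ} is the power envelope at level α for testing μ_0 against the negative local alternatives μ_h, h < 0.) -/
open MeasureTheory Real

noncomputable section

attribute [local instance] Classical.propDecidable

/-- The exponential distribution with scale `lam` shifted to start at `h`:
the measure on `ℝ` with Lebesgue density `w ↦ lam⁻¹ e^{−(w−h)/lam} 𝟙{w > h}`. -/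
def expShift (lam h : ℝ) : Measure ℝ :=
  (volume : Measure ℝ).withDensity fun w =>
    ENNReal.ofReal (lam⁻¹ * exp (-(w - h) / lam) * if h < w then 1 else 0)

variable (lam : ℝ)

def dens (lam h : ℝ) (w : ℝ) : ℝ := lam⁻¹ * exp (-(w - h) / lam) * if h < w then 1 else 0

lemma dens_nonneg (hlam : 0 < lam) (h w : ℝ) : 0 ≤ dens lam h w := by
  unfold dens
  positivity

lemma dens_meas (h : ℝ) : Measurable (dens lam h) := by
  unfold dens
  apply Measurable.mul
  · exact (measurable_const.mul (by fun_prop))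
  · exact Measurable.ite (measurableSet_Ioi (a := h)) measurable_const measurable_const

lemma integral_expShift (hlam : 0 < lam) (h : ℝ) (g : ℝ → ℝ) :
    ∫ w, g w ∂ expShift lam h = ∫ w, dens lam h w * g w := by
  have hd : Measurable fun w => (dens lam h w).toNNReal :=
    (dens_meas lam h).real_toNNReal
  have : expShift lam h = (volume : Measure ℝ).withDensity
      (fun w => ((dens lam h w).toNNReal : ENNReal)) := rfl
  rw [this, integral_withDensity_eq_integral_smul hd]
  congr 1
  funext w
  rw [NNReal.smul_def, smul_eq_mul, Real.coe_toNNReal _ (dens_nonneg lam hlam h w)]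

lemma dens_integrable (hlam : 0 < lam) (h : ℝ) : Integrable (dens lam h) := by
  have : dens lam h = Set.indicator (Set.Ioi h)
      (fun w => (lam⁻¹ * exp (h / lam)) * exp (-lam⁻¹ * w)) := by
    funext w
    unfold dens
    rw [Set.indicator_apply]
    by_cases hw : h < w <;> simp [hw, Set.mem_Ioi, ← Real.exp_add]
    · rw [mul_assoc, ← Real.exp_add]
      congr 1
      ring
  rw [this]
  exact IntegrableOn.integrable_indicator
    ((exp_neg_integrableOn_Ioi h (show (0:ℝ) < lam⁻¹ by positivity)).const_mul _)
    measurableSet_Ioi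

lemma tail_integral (hlam : 0 < lam) {h : ℝ} (h0 : h ≤ 0) :
    ∫ w, (if w ≤ 0 then dens lam h w else 0) = 1 - exp (h / lam) := by
  have heq : (fun w => if w ≤ 0 then dens lam h w else 0) =
      Set.indicator (Set.Ioc h 0) (fun w => lam⁻¹ * exp (-(w - h) / lam)) := by
    funext w
    rw [Set.indicator_apply]
    unfold dens
    by_cases h1 : w ≤ 0 <;> by_cases h2 : h < w <;>
      simp [h1, h2, Set.mem_Ioc]
  rw [heq, integral_indicator measurableSet_Ioc,
    ← intervalIntegral.integral_of_le h0]
  have : ∫ w in h..0, lam⁻¹ * exp (-(w - h) / lam)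
      = (fun w => -exp (-(w - h) / lam)) 0 - (fun w => -exp (-(w - h) / lam)) h := by
    apply intervalIntegral.integral_eq_sub_of_hasDerivAt
      (f := fun w => -exp (-(w - h) / lam)) (f' := fun w => lam⁻¹ * exp (-(w - h) / lam))
    · intro x _
      have h1 : HasDerivAt (fun w : ℝ => -(w - h) / lam) (-1 / lam) x :=
        (((hasDerivAt_id x).sub_const h).neg).div_const lam
      have h2 := (h1.exp).neg
      convert h2 using 1
      · rfl
      · ring
    · apply Continuous.intervalIntegrable
      fun_prop
  rw [this]
  simp only []
  rw [show -((0:ℝ) - h) / lam = h / lam by ring, show -(h - h) / lam = (0:ℝ) by ring]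
  simp
  ring

lemma pointwise_bound (hlam : 0 < lam) {h : ℝ} (h0 : h ≤ 0)
    (ψ : ℝ → ℝ) (hrange : ∀ w, ψ w ∈ Set.Icc (0 : ℝ) 1) (w : ℝ) :
    dens lam h w * ψ w ≤
      (if w ≤ 0 then dens lam h w else 0) + exp (h / lam) * (dens lam 0 w * ψ w) := by
  obtain ⟨hr0, hr1⟩ := hrange w
  by_cases hw : w ≤ 0
  · have : dens lam 0 w = 0 := by
      unfold dens
      have : ¬ (0 : ℝ) < w := not_lt.mpr hw
      simp [this]
    rw [this]
    simp [hw]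
    calc dens lam h w * ψ w ≤ dens lam h w * 1 :=
          mul_le_mul_of_nonneg_left hr1 (dens_nonneg lam hlam h w)
      _ = dens lam h w := mul_one _
  · push_neg at hw
    have hhw : h < w := lt_of_le_of_lt h0 hw
    have : dens lam h w = exp (h / lam) * dens lam 0 w := by
      unfold dens
      simp only [hhw, hw, if_pos, mul_one, sub_zero]
      rw [show rexp (h / lam) * (lam⁻¹ * rexp (-w / lam)) =
        lam⁻¹ * (rexp (h / lam) * rexp (-w / lam)) by ring, ← Real.exp_add]
      congr 1
      ring
    rw [this]
    simp [not_le.mpr hw]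
    ring_nf
    exact le_rfl

/-- Power envelope against negative alternatives: any level-`α` test of `μ_0`
has power at most `1 − (1 − α) e^{h/λ}` at `μ_h`, `h ≤ 0`. -/
theorem power_envelope_neg (lam α : ℝ) (hlam : 0 < lam) (hα : α ∈ Set.Ioo (0 : ℝ) 1)
    (ψ : ℝ → ℝ) (hmeas : Measurable ψ) (hrange : ∀ w, ψ w ∈ Set.Icc (0 : ℝ) 1)
    (hsize : ∫ w, ψ w ∂ expShift lam 0 ≤ α) :
    ∀ h : ℝ, h ≤ 0 → ∫ w, ψ w ∂ expShift lam h ≤ 1 - (1 - α) * exp (h / lam) := by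
  intro h h0
  rw [integral_expShift lam hlam 0 ψ] at hsize
  rw [integral_expShift lam hlam h ψ]
  -- integrability facts
  have I1 : Integrable (fun w => if w ≤ 0 then dens lam h w else 0) := by
    have : (fun w => if w ≤ 0 then dens lam h w else 0)
        = Set.indicator (Set.Iic 0) (dens lam h) := by
      funext w
      rw [Set.indicator_apply]
      simp [Set.mem_Iic]
    rw [this]
    exact (dens_integrable lam hlam h).indicator measurableSet_Iic
  have I2 : Integrable (fun w => dens lam 0 w * ψ w) := by
    apply Integrable.mono' (dens_integrable lam hlam 0)
      (((dens_meas lam 0).mul hmeas).aestronglyMeasurable)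
    filter_upwards with w
    obtain ⟨hr0, hr1⟩ := hrange w
    have hd := dens_nonneg lam hlam 0 w
    rw [Real.norm_eq_abs, abs_of_nonneg (show 0 ≤ (dens lam 0 * ψ) w from mul_nonneg hd hr0)]
    calc dens lam 0 w * ψ w ≤ dens lam 0 w * 1 := mul_le_mul_of_nonneg_left hr1 hd
      _ = dens lam 0 w := mul_one _
  have Imain : ∫ w, dens lam h w * ψ w ≤
      ∫ w, ((if w ≤ 0 then dens lam h w else 0) + exp (h / lam) * (dens lam 0 w * ψ w)) := by
    apply integral_mono_of_nonneg
    · filter_upwards with w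
      have := dens_nonneg lam hlam h w
      have := (hrange w).1
      positivity
    · exact I1.add (I2.const_mul _)
    · filter_upwards with w
      exact pointwise_bound lam hlam h0 ψ hrange w
  rw [integral_add I1 (I2.const_mul _), MeasureTheory.integral_const_mul,
    tail_integral lam hlam h0] at Imain
  have hexp := Real.exp_pos (h / lam)
  nlinarith [Imain, hsize, hexp]
end
end

section
/- Let α ∈ (0,1) and h̄ < 0. The test ψ(w) := 1 if h̄ < w ≤ 0 and ψ(w) := α otherwise (i.e., if w > 0 or w ≤ h̄) satisfies ∫ψ dμ_0 = α and ∫ψ dμ_{h̄} = 1 − (1 − α)·e^{h̄/λ}; thus it attains the Neyman–Pearson power Π(h̄) = 1 − (1 − α)·e^{h̄/λ} for testing μ_0 against μ_{h̄} at level α. -/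
open MeasureTheory Real Set

noncomputable section

attribute [local instance] Classical.propDecidable

lemma exp_shift_eq (lam h : ℝ) (hlam : 0 < lam) :
    (fun w : ℝ => exp (-(w - h)/lam)) = fun w => exp (h/lam) * exp (-lam⁻¹ * w) := by
  funext w
  rw [← exp_add]
  congr 1
  field_simp
  ring

lemma expIntOn (lam h a : ℝ) (hlam : 0 < lam) :
    IntegrableOn (fun w : ℝ => exp (-(w - h)/lam)) (Ioi a) := by
  rw [exp_shift_eq lam h hlam]
  exact (exp_neg_integrableOn_Ioi a (by positivity)).const_mul _

lemma expVal (lam h a : ℝ) (hlam : 0 < lam) :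
    ∫ w in Ioi a, exp (-(w - h)/lam) = lam * exp (-(a - h)/lam) := by
  rw [exp_shift_eq lam h hlam, integral_const_mul _ _]
  have := integral_comp_mul_left_Ioi (fun x => exp (-x)) a (show (0:ℝ) < lam⁻¹ by positivity)
  simp only [neg_mul] at this ⊢
  rw [this, integral_exp_neg_Ioi, smul_eq_mul, inv_inv]
  rw [show -(a-h)/lam = h/lam + -(lam⁻¹*a) by field_simp; ring, exp_add]
  ring

lemma integral_expShift_s12 (lam h : ℝ) (hlam : 0 < lam) (ψ : ℝ → ℝ) :
    ∫ w, ψ w ∂ ((volume : Measure ℝ).withDensity fun w =>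
      ENNReal.ofReal (lam⁻¹ * exp (-(w - h) / lam) * if h < w then 1 else 0))
      = ∫ w in Ioi h, lam⁻¹ * exp (-(w - h)/lam) * ψ w := by
  set d : ℝ → ℝ := fun w => lam⁻¹ * exp (-(w - h)/lam) * if h < w then 1 else 0 with hd
  have hd_meas : Measurable fun w => (d w).toNNReal := by
    apply Measurable.real_toNNReal
    apply Measurable.mul
    · fun_prop
    · exact measurable_const.ite measurableSet_Ioi measurable_const
  have heq : (fun w => ENNReal.ofReal (lam⁻¹ * exp (-(w - h) / lam) * if h < w then 1 else 0))
      = fun w => ((d w).toNNReal : ENNReal) := rfl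
  rw [heq, integral_withDensity_eq_integral_smul hd_meas,
    ← integral_indicator measurableSet_Ioi]
  congr 1
  funext w
  have hdnn : 0 ≤ d w := by
    rw [hd]
    by_cases hw : h < w <;> simp [hw] <;> positivity
  rw [NNReal.smul_def, Real.coe_toNNReal _ hdnn]
  by_cases hw : h < w
  · simp [Set.indicator, hw, hd]
  · simp [Set.indicator, hw, hd]

/-- The Neyman–Pearson test of `μ_0` against `μ_{h̄}`, `h̄ < 0`: it has size `α`
and attains power `1 − (1 − α) e^{h̄/λ}`. -/
theorem np_test_neg (lam α hb : ℝ) (hlam : 0 < lam) (hα : α ∈ Set.Ioo (0 : ℝ) 1)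
    (hhb : hb < 0) :
    ∫ w, (if hb < w ∧ w ≤ 0 then (1 : ℝ) else α) ∂ expShift lam 0 = α ∧
    ∫ w, (if hb < w ∧ w ≤ 0 then (1 : ℝ) else α) ∂ expShift lam hb =
      1 - (1 - α) * exp (hb / lam) := by
  constructor
  · rw [expShift, integral_expShift_s12 lam 0 hlam]
    have : EqOn (fun w => lam⁻¹ * exp (-(w - 0)/lam) * if hb < w ∧ w ≤ 0 then (1:ℝ) else α)
        (fun w => α * (lam⁻¹ * exp (-(w - 0)/lam))) (Ioi 0) := by
      intro w hw
      simp only [mem_Ioi] at hw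
      have : ¬ (hb < w ∧ w ≤ 0) := fun ⟨_, h2⟩ => absurd (lt_of_lt_of_le hw h2) (lt_irrefl 0)
      simp [this]
      ring
    rw [setIntegral_congr_fun measurableSet_Ioi this, integral_const_mul _ _, integral_const_mul _ _, expVal lam 0 0 hlam]
    simp [hlam.ne']
  · rw [expShift, integral_expShift_s12 lam hb hlam]
    have hunion : Ioc hb 0 ∪ Ioi (0:ℝ) = Ioi hb := Ioc_union_Ioi_eq_Ioi hhb.le
    set f : ℝ → ℝ := fun w => lam⁻¹ * exp (-(w - hb)/lam) * if hb < w ∧ w ≤ 0 then (1:ℝ) else α with hf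
    have heq1 : EqOn f (fun w => lam⁻¹ * exp (-(w - hb)/lam)) (Ioc hb 0) := by
      intro w hw
      simp only [mem_Ioc] at hw
      simp [hf, hw.1, hw.2]
    have heq2 : EqOn f (fun w => α * lam⁻¹ * exp (-(w - hb)/lam)) (Ioi 0) := by
      intro w hw
      simp only [mem_Ioi] at hw
      have : ¬ (hb < w ∧ w ≤ 0) := fun ⟨_, h2⟩ => absurd (lt_of_lt_of_le hw h2) (lt_irrefl 0)
      simp [hf, this]
      ring
    have hi1 : IntegrableOn f (Ioc hb 0) := by
      apply (IntegrableOn.congr_fun ?_ heq1.symm measurableSet_Ioc)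
      exact (((expIntOn lam hb hb hlam).mono_set Ioc_subset_Ioi_self).const_mul _)
    have hi2 : IntegrableOn f (Ioi 0) := by
      apply (IntegrableOn.congr_fun ?_ heq2.symm measurableSet_Ioi)
      exact ((expIntOn lam hb 0 hlam).const_mul _)
    rw [← hunion, setIntegral_union (Ioc_disjoint_Ioi le_rfl) measurableSet_Ioi hi1 hi2,
      setIntegral_congr_fun measurableSet_Ioc heq1, setIntegral_congr_fun measurableSet_Ioi heq2]
    have hIoc : ∫ w in Ioc hb 0, lam⁻¹ * exp (-(w - hb)/lam)
        = lam⁻¹ * (lam * exp (-(hb - hb)/lam)) - lam⁻¹ * (lam * exp (-(0 - hb)/lam)) := by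
      rw [← expVal lam hb hb hlam, ← expVal lam hb 0 hlam, ← integral_const_mul _ _, ← integral_const_mul _ _]
      rw [← hunion, setIntegral_union (Ioc_disjoint_Ioi le_rfl) measurableSet_Ioi
        (((expIntOn lam hb hb hlam).mono_set (hunion ▸ subset_union_left)).const_mul _)
        (((expIntOn lam hb 0 hlam)).const_mul _)]
      ring
    rw [hIoc, integral_const_mul _ _, mul_assoc, expVal lam hb 0 hlam]
    have h1 : lam⁻¹ * lam = 1 := inv_mul_cancel₀ hlam.ne'
    have h2 : -(hb - hb)/lam = 0 := by simp
    have h3 : -(0 - hb)/lam = hb/lam := by ring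
    rw [h2, h3, exp_zero]
    field_simp
    ring
end
end

section
/- Let α ∈ (0,1). Every measurable test ψ : ℝ → [0,1] with size ∫ψ dμ_0 ≤ α satisfies, for every h ∈ ℝ, ∫ψ dμ_h ≤ min{α·e^{h/λ}, 1} + 1 − min{e^{h/λ}, 1}. (This is the two-sided power envelope at level α for testing μ_0 against all alternatives μ_h, h ≠ 0.) -/
open MeasureTheory Real Set Filter
open scoped ENNReal NNReal

noncomputable section

attribute [local instance] Classical.propDecidable

def gfun (lam h w : ℝ) : ℝ := lam⁻¹ * exp (-(w - h) / lam)

lemma gfun_cont (lam h : ℝ) : Continuous (gfun lam h) := by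
  unfold gfun; fun_prop

lemma gfun_nonneg (lam h w : ℝ) (hlam : 0 < lam) : 0 ≤ gfun lam h w := by
  unfold gfun; positivity

lemma gfun_deriv (lam h x : ℝ) (hlam : 0 < lam) :
    HasDerivAt (fun w => -exp (-(w - h) / lam)) (gfun lam h x) x := by
  have h1 : HasDerivAt (fun w : ℝ => -(w - h) / lam) (-1 / lam) x :=
    (((hasDerivAt_id x).sub_const h).neg).div_const lam
  have h2 := (h1.exp).neg
  rw [show gfun lam h x = -(exp (-(x - h) / lam) * (-1 / lam)) by unfold gfun; ring]
  exact h2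

lemma gfun_intOn (lam h a : ℝ) (hlam : 0 < lam) : IntegrableOn (gfun lam h) (Ioi a) := by
  have : gfun lam h = fun w => (lam⁻¹ * exp (h / lam)) * exp (-lam⁻¹ * w) := by
    funext w
    unfold gfun
    rw [mul_assoc, ← Real.exp_add]
    ring_nf
  rw [this]
  exact (exp_neg_integrableOn_Ioi a (by positivity)).const_mul _

lemma gfun_int_Ioi (lam h : ℝ) (hlam : 0 < lam) : ∫ w in Ioi h, gfun lam h w = 1 := by
  have := integral_Ioi_of_hasDerivAt_of_tendsto (f := fun w => -exp (-(w - h) / lam))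
      (f' := gfun lam h) (a := h) (m := 0)
      (Continuous.continuousWithinAt (by fun_prop)) (fun x _ => gfun_deriv lam h x hlam)
      (gfun_intOn lam h h hlam) ?_
  · simpa using this
  · have h1 : Tendsto (fun w : ℝ => -(w - h) / lam) atTop atBot := by
      apply Tendsto.atBot_div_const hlam
      exact tendsto_neg_atBot_iff.mpr (tendsto_atTop_add_const_right _ (-h) tendsto_id)
    have := (tendsto_exp_atBot.comp h1).neg
    simpa using this

lemma gfun_int_Ioc (lam h : ℝ) (hlam : 0 < lam) (hh : h ≤ 0) :
    ∫ w in Ioc h 0, gfun lam h w = 1 - exp (h / lam) := by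
  have hint : ∫ w in h..0, gfun lam h w
      = (fun w => -exp (-(w - h) / lam)) 0 - (fun w => -exp (-(w - h) / lam)) h := by
    exact intervalIntegral.integral_eq_sub_of_hasDerivAt (fun x _ => gfun_deriv lam h x hlam)
      ((gfun_cont lam h).intervalIntegrable h 0)
  rw [intervalIntegral.integral_of_le hh] at hint
  rw [hint]
  simp
  ring_nf

lemma gfun_shift (lam h w : ℝ) (hlam : 0 < lam) :
    gfun lam h w = exp (h / lam) * gfun lam 0 w := by
  have e : -(w - h) / lam = h / lam + -(w - 0) / lam := by field_simp; ring
  unfold gfun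
  rw [e, Real.exp_add]
  ring

lemma integral_expShift_s13 (lam h : ℝ) (hlam : 0 < lam) (ψ : ℝ → ℝ) (hmeas : Measurable ψ) :
    ∫ w, ψ w ∂ expShift lam h
      = ∫ w, (Ioi h).indicator (gfun lam h) w * ψ w := by
  have hdm : Measurable fun w =>
      (lam⁻¹ * exp (-(w - h) / lam) * if h < w then (1:ℝ) else 0) := by
    apply Measurable.mul (by fun_prop)
    exact Measurable.ite measurableSet_Ioi measurable_const measurable_const
  have key := integral_withDensity_eq_integral_smul
      (f := fun w => (lam⁻¹ * exp (-(w - h) / lam) * if h < w then (1:ℝ) else 0).toNNReal)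
      (μ := (volume : Measure ℝ)) (hdm.real_toNNReal) ψ
  rw [expShift]
  have : (fun w => ENNReal.ofReal (lam⁻¹ * exp (-(w - h) / lam) * if h < w then (1:ℝ) else 0))
      = fun w => ((lam⁻¹ * exp (-(w - h) / lam) * if h < w then (1:ℝ) else 0).toNNReal : ℝ≥0∞) :=
    rfl
  rw [this, key]
  congr 1
  funext w
  rw [NNReal.smul_def, Real.coe_toNNReal _
    (mul_nonneg (by positivity) (by split_ifs <;> norm_num))]
  by_cases hw : h < w
  · simp [hw, indicator_of_mem (mem_Ioi.mpr hw), gfun]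
  · simp [hw, indicator_of_notMem (by simpa using hw : w ∉ Ioi h)]

/-- Two-sided power envelope: any level-`α` test of `μ_0` has power at most
`min{α e^{h/λ}, 1} + 1 − min{e^{h/λ}, 1}` at every `μ_h`. -/
theorem power_envelope_two_sided (lam α : ℝ) (hlam : 0 < lam) (hα : α ∈ Set.Ioo (0 : ℝ) 1)
    (ψ : ℝ → ℝ) (hmeas : Measurable ψ) (hrange : ∀ w, ψ w ∈ Set.Icc (0 : ℝ) 1)
    (hsize : ∫ w, ψ w ∂ expShift lam 0 ≤ α) :
    ∀ h : ℝ, ∫ w, ψ w ∂ expShift lam h ≤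
      min (α * exp (h / lam)) 1 + 1 - min (exp (h / lam)) 1 := by
  intro h
  set c : ℝ := exp (h / lam) with hc_def
  have hc : 0 < c := exp_pos _
  -- notation
  set D : ℝ → ℝ → ℝ := fun a => (Ioi a).indicator (gfun lam a) with hD
  have hDnn : ∀ a w, 0 ≤ D a w := fun a w =>
    indicator_nonneg (fun x _ => gfun_nonneg lam a x hlam) w
  have hDmeas : ∀ a, Measurable (D a) := fun a =>
    ((gfun_cont lam a).measurable).indicator measurableSet_Ioi
  have hDint : ∀ a, Integrable (D a) := fun a =>
    (gfun_intOn lam a a hlam).integrable_indicator measurableSet_Ioi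
  have hDtot : ∀ a, ∫ w, D a w = 1 := by
    intro a
    rw [hD, integral_indicator measurableSet_Ioi]
    exact gfun_int_Ioi lam a hlam
  have hψ0 : ∀ w, 0 ≤ ψ w := fun w => (hrange w).1
  have hψ1 : ∀ w, ψ w ≤ 1 := fun w => (hrange w).2
  have hDψint : ∀ a, Integrable (fun w => D a w * ψ w) := by
    intro a
    refine (hDint a).mono' (((hDmeas a).mul hmeas).aestronglyMeasurable) ?_
    filter_upwards with w
    rw [Real.norm_eq_abs, abs_mul, abs_of_nonneg (hDnn a w), abs_of_nonneg (hψ0 w)]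
    calc D a w * ψ w ≤ D a w * 1 := by
          exact mul_le_mul_of_nonneg_left (hψ1 w) (hDnn a w)
      _ = D a w := mul_one _
  rw [integral_expShift_s13 lam h hlam ψ hmeas]
  rw [integral_expShift_s13 lam 0 hlam ψ hmeas] at hsize
  -- I_h ≤ 1
  have hIh1 : ∫ w, D h w * ψ w ≤ 1 := by
    rw [← hDtot h]
    refine integral_mono (hDψint h) (hDint h) fun w => ?_
    calc D h w * ψ w ≤ D h w * 1 := mul_le_mul_of_nonneg_left (hψ1 w) (hDnn h w)
      _ = D h w := mul_one _
  have hI0nn : 0 ≤ ∫ w, D 0 w * ψ w :=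
    integral_nonneg fun w => mul_nonneg (hDnn 0 w) (hψ0 w)
  by_cases hsign : 0 ≤ h
  · -- c ≥ 1
    have hc1 : 1 ≤ c := one_le_exp (div_nonneg hsign hlam.le)
    have key : ∫ w, D h w * ψ w ≤ c * ∫ w, D 0 w * ψ w := by
      rw [← integral_const_mul]
      refine integral_mono (hDψint h) (((hDψint 0).const_mul c)) fun w => ?_
      by_cases hw : h < w
      · have hw0 : (0:ℝ) < w := lt_of_le_of_lt hsign hw
        have : D h w = c * D 0 w := by
          rw [hD]
          simp only [indicator_of_mem (mem_Ioi.mpr hw), indicator_of_mem (mem_Ioi.mpr hw0)]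
          exact gfun_shift lam h w hlam
        rw [this]; exact le_of_eq (by ring)
      · have : D h w = 0 := indicator_of_notMem (by simpa using hw) _
        rw [this, zero_mul]
        exact mul_nonneg hc.le (mul_nonneg (hDnn 0 w) (hψ0 w))
    have hle : ∫ w, D h w * ψ w ≤ min (α * c) 1 := by
      refine le_min ?_ hIh1
      calc ∫ w, D h w * ψ w ≤ c * ∫ w, D 0 w * ψ w := key
        _ ≤ c * α := mul_le_mul_of_nonneg_left hsize hc.le
        _ = α * c := mul_comm _ _
    rw [min_eq_right hc1]
    linarith
  · -- h < 0
    push_neg at hsign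
    have hc1 : c ≤ 1 := exp_le_one_iff.mpr (div_nonpos_of_nonpos_of_nonneg hsign.le hlam.le)
    set E : ℝ → ℝ := (Ioc h 0).indicator (gfun lam h) with hEdef
    have hEint : Integrable E :=
      ((gfun_intOn lam h h hlam).mono_set Ioc_subset_Ioi_self).integrable_indicator
        measurableSet_Ioc
    have hEtot : ∫ w, E w = 1 - c := by
      rw [hEdef, integral_indicator measurableSet_Ioc]
      exact gfun_int_Ioc lam h hlam hsign.le
    have key : ∫ w, D h w * ψ w ≤ c * (∫ w, D 0 w * ψ w) + (1 - c) := by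
      rw [← hEtot, ← integral_const_mul, ← integral_add ((hDψint 0).const_mul c) hEint]
      refine integral_mono (hDψint h) (((hDψint 0).const_mul c).add hEint) fun w => ?_
      have hEnn : 0 ≤ E w := indicator_nonneg (fun x _ => gfun_nonneg lam h x hlam) w
      by_cases hw : h < w
      · by_cases hw0 : 0 < w
        · have h1 : D h w = c * D 0 w := by
            rw [hD]
            simp only [indicator_of_mem (mem_Ioi.mpr hw), indicator_of_mem (mem_Ioi.mpr hw0)]
            exact gfun_shift lam h w hlam
          rw [h1]
          calc c * D 0 w * ψ w = c * (D 0 w * ψ w) := by ring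
            _ ≤ c * (D 0 w * ψ w) + E w := le_add_of_nonneg_right hEnn
        · push_neg at hw0
          have hD0 : D 0 w = 0 := indicator_of_notMem (by simpa using hw0) _
          have hDh : D h w = gfun lam h w := indicator_of_mem (mem_Ioi.mpr hw) _
          have hEw : E w = gfun lam h w := indicator_of_mem (mem_Ioc.mpr ⟨hw, hw0⟩) _
          rw [hD0, hDh, hEw]
          have : gfun lam h w * ψ w ≤ gfun lam h w * 1 :=
            mul_le_mul_of_nonneg_left (hψ1 w) (gfun_nonneg lam h w hlam)
          simpa using this.trans_eq (mul_one _)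
      · have : D h w = 0 := indicator_of_notMem (by simpa using hw) _
        rw [this, zero_mul]
        have : 0 ≤ c * (D 0 w * ψ w) :=
          mul_nonneg hc.le (mul_nonneg (hDnn 0 w) (hψ0 w))
        linarith
    have hαc1 : α * c ≤ 1 := by nlinarith [hα.1, hα.2]
    rw [min_eq_left hαc1, min_eq_left hc1]
    have : c * (∫ w, D 0 w * ψ w) ≤ c * α := mul_le_mul_of_nonneg_left hsize hc.le
    nlinarith
end
end

section
/- Assume additionally that G_j > 0 for every j, let λ := (Σ_{j=1}^L G_j/λ_j)^{-1}, and let α ∈ (0,1). Every measurable test ψ : ℝ^L → [0,1] with size ∫ψ dν_0 ≤ α satisfies, for every h < 0, ∫ψ dν_h ≤ 1 − (1 − α)·e^{h/λ}. (That is, 1 − (1 − α)·e^{h/λ} is the power envelope at level α for testing ν_0 against the negative local alternatives ν_h, h < 0, in the limit experiment of the covariate model.) -/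
open MeasureTheory Real
open ProbabilityTheory
open scoped ENNReal

noncomputable section

attribute [local instance] Classical.propDecidable

lemma lintegral_pi_prod : ∀ {n : ℕ} (μ : Fin n → Measure ℝ), (∀ i, SigmaFinite (μ i)) →
    ∀ (f : Fin n → ℝ → ℝ≥0∞), (∀ i, Measurable (f i)) →
    ∫⁻ x : Fin n → ℝ, ∏ i, f i (x i) ∂Measure.pi μ = ∏ i, ∫⁻ x, f i x ∂μ i := by
  intro n
  induction n with
  | zero =>
    intro μ _ f hf
    simp [Measure.pi_of_empty]
  | succ n ih =>
    intro μ hσ f hf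
    haveI := hσ
    have A := measurePreserving_piFinSuccAbove μ 0
    have hmeas : Measurable (fun y : ℝ × (Fin n → ℝ) => f 0 y.1 * ∏ j, f j.succ (y.2 j)) := by
      apply ((hf 0).comp measurable_fst).mul
      exact Finset.measurable_prod _ fun j _ => (hf j.succ).comp ((measurable_pi_apply j).comp measurable_snd)
    have e1 : ∫⁻ x : Fin (n+1) → ℝ, ∏ i, f i (x i) ∂Measure.pi μ
        = ∫⁻ y : ℝ × (Fin n → ℝ), f 0 y.1 * ∏ j, f j.succ (y.2 j)
            ∂((μ 0).prod (Measure.pi fun j => μ ((0 : Fin (n+1)).succAbove j))) := by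
      rw [← A.lintegral_comp hmeas]
      congr 1
      funext x
      simp [MeasurableEquiv.piFinSuccAbove, Fin.prod_univ_succ, Fin.zero_succAbove, Fin.tail]
    rw [e1]
    have := lintegral_prod_mul (μ := μ 0)
      (ν := Measure.pi fun j => μ ((0 : Fin (n+1)).succAbove j))
      (hf 0).aemeasurable
      (Finset.measurable_prod Finset.univ (fun (j : Fin n) (_ : j ∈ Finset.univ) =>
        (hf j.succ).comp (measurable_pi_apply j))).aemeasurable
    simp only [Function.comp] at this
    rw [this]
    simp_rw [Fin.zero_succAbove]
    rw [ih _ (fun i => inferInstance) _ (fun i => hf i.succ), Fin.prod_univ_succ]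

/-- density of one factor -/
def expDens (lam a : ℝ) (w : ℝ) : ℝ≥0∞ :=
  ENNReal.ofReal (lam⁻¹ * exp (-(w - a) / lam) * if a < w then 1 else 0)

lemma expDens_measurable (lam a : ℝ) : Measurable (expDens lam a) := by
  apply Measurable.ennreal_ofReal
  apply Measurable.mul
  · exact measurable_const.mul (((measurable_id.sub_const a).neg.div_const lam).exp)
  · exact Measurable.ite (measurableSet_lt measurable_const measurable_id) measurable_const measurable_const

lemma expDens_lintegral (lam a : ℝ) (hlam : 0 < lam) :
    ∫⁻ w, expDens lam a w = 1 := by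
  have hae : ∀ᵐ w : ℝ, w ≠ a := by
    refine ae_iff.mpr ?_
    have : {w : ℝ | ¬ w ≠ a} = {a} := by ext w; simp
    rw [this]
    exact Real.volume_singleton
  have h1 : (fun w => expDens lam a w) =ᵐ[volume] fun w => exponentialPDF lam⁻¹ (w - a) := by
    filter_upwards [hae] with w hw
    rcases lt_or_gt_of_ne hw with hlt | hgt
    · -- w < a
      rw [expDens, if_neg (not_lt.mpr hlt.le), exponentialPDF_of_neg (by linarith)]
      simp
    · -- a < w
      rw [expDens, if_pos hgt, exponentialPDF_of_nonneg (by linarith : (0:ℝ) ≤ w - a)]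
      rw [mul_one]
      congr 1
      rw [neg_div]
      ring_nf
  rw [lintegral_congr_ae h1, lintegral_sub_right_eq_self (fun w => exponentialPDF lam⁻¹ w) a,
    lintegral_exponentialPDF_eq_one (inv_pos.mpr hlam)]

lemma expDens_prob (lam a : ℝ) (hlam : 0 < lam) :
    IsProbabilityMeasure ((volume : Measure ℝ).withDensity (expDens lam a)) :=
  ⟨by rw [withDensity_apply _ MeasurableSet.univ, Measure.restrict_univ, expDens_lintegral _ _ hlam]⟩

/-- The product measure `ν_h` on `ℝ^L` whose `j`-th factor has Lebesgue density
`w ↦ λ_j⁻¹ e^{−(w − G_j h)/λ_j} 𝟙{w > G_j h}` (exponential with scale `λ_j`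
shifted to start at `G_j h`). -/
def nuMeas {L : ℕ} (lams G : Fin L → ℝ) (h : ℝ) : Measure (Fin L → ℝ) :=
  Measure.pi fun j => (volume : Measure ℝ).withDensity fun w =>
    ENNReal.ofReal ((lams j)⁻¹ * exp (-(w - G j * h) / lams j) * if G j * h < w then 1 else 0)

lemma nuMeas_eq {L : ℕ} (lams G : Fin L → ℝ) (hlams : ∀ j, 0 < lams j) (h : ℝ) :
    nuMeas lams G h = (Measure.pi fun _ : Fin L => (volume : Measure ℝ)).withDensity
      (fun x => ∏ j, expDens (lams j) (G j * h) (x j)) := by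
  haveI : ∀ j : Fin L, IsProbabilityMeasure
      ((volume : Measure ℝ).withDensity (expDens (lams j) (G j * h))) :=
    fun j => expDens_prob _ _ (hlams j)
  show Measure.pi (fun j => (volume : Measure ℝ).withDensity (expDens (lams j) (G j * h))) = _
  refine Measure.pi_eq fun s hs => ?_
  rw [withDensity_apply _ (MeasurableSet.univ_pi hs),
    ← lintegral_indicator (MeasurableSet.univ_pi hs)]
  have hpt : ∀ x : Fin L → ℝ,
      (Set.univ.pi s).indicator (fun x => ∏ j, expDens (lams j) (G j * h) (x j)) x
        = ∏ j, (s j).indicator (expDens (lams j) (G j * h)) (x j) := by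
    intro x
    by_cases hx : x ∈ Set.univ.pi s
    · rw [Set.indicator_of_mem hx]
      exact Finset.prod_congr rfl fun j _ =>
        (Set.indicator_of_mem (hx j (Set.mem_univ j)) _).symm
    · rw [Set.indicator_of_notMem hx]
      obtain ⟨j, hj⟩ : ∃ j, x j ∉ s j := by
        by_contra hc
        push_neg at hc
        exact hx fun j _ => hc j
      exact (Finset.prod_eq_zero (Finset.mem_univ j) (Set.indicator_of_notMem hj _)).symm
  rw [lintegral_congr hpt,
    lintegral_pi_prod _ (fun _ => inferInstance) _
      (fun j => (expDens_measurable _ _).indicator (hs j))]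
  exact Finset.prod_congr rfl fun j _ => by
    rw [lintegral_indicator (hs j), withDensity_apply _ (hs j)]

lemma nuMeas_prob {L : ℕ} (lams G : Fin L → ℝ) (hlams : ∀ j, 0 < lams j) (h : ℝ) :
    IsProbabilityMeasure (nuMeas lams G h) := by
  haveI : ∀ j : Fin L, IsProbabilityMeasure
      ((volume : Measure ℝ).withDensity fun w =>
        ENNReal.ofReal ((lams j)⁻¹ * exp (-(w - G j * h) / lams j) * if G j * h < w then 1 else 0)) :=
    fun j => expDens_prob (lams j) (G j * h) (hlams j)
  rw [nuMeas]
  infer_instance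

lemma expDens_factor (lam a : ℝ) (hlam : 0 < lam) (ha : a < 0) (w : ℝ) :
    ENNReal.ofReal (exp (a / lam)) * expDens lam 0 w ≤ expDens lam a w := by
  by_cases hw : (0 : ℝ) < w
  · have haw : a < w := ha.trans hw
    rw [expDens, expDens, if_pos hw, if_pos haw, mul_one, mul_one, sub_zero,
      ← ENNReal.ofReal_mul (exp_nonneg _)]
    apply le_of_eq
    congr 1
    have h1 : exp (a / lam) * (lam⁻¹ * exp (-w / lam)) = lam⁻¹ * (exp (a / lam) * exp (-w / lam)) := by
      ring
    rw [h1, ← Real.exp_add]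
    congr 2
    ring
  · rw [expDens, if_neg hw, mul_zero, ENNReal.ofReal_zero, mul_zero]
    exact zero_le

lemma prod_factor {L : ℕ} (lams G : Fin L → ℝ) (hlams : ∀ j, 0 < lams j)
    (hG : ∀ j, 0 < G j) (h : ℝ) (hneg : h < 0) (x : Fin L → ℝ) :
    ENNReal.ofReal (exp (h * ∑ j, G j / lams j)) * ∏ j, expDens (lams j) 0 (x j)
      ≤ ∏ j, expDens (lams j) (G j * h) (x j) := by
  have e1 : ENNReal.ofReal (exp (h * ∑ j, G j / lams j))
      = ∏ j, ENNReal.ofReal (exp (G j * h / lams j)) := by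
    rw [← ENNReal.ofReal_prod_of_nonneg (fun j _ => exp_nonneg _), ← Real.exp_sum]
    congr 2
    rw [Finset.mul_sum]
    exact Finset.sum_congr rfl fun j _ => by ring
  rw [e1, ← Finset.prod_mul_distrib]
  exact Finset.prod_le_prod' fun j _ =>
    expDens_factor _ _ (hlams j) (mul_neg_of_pos_of_neg (hG j) hneg) (x j)

/-- Power envelope against negative alternatives in the limit experiment of the
covariate model, when every `G_j > 0`, with `λ = (Σ_j G_j/λ_j)⁻¹`. -/
theorem nu_power_envelope_neg (L : ℕ) (hL : 1 ≤ L) (lams G : Fin L → ℝ)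
    (hlams : ∀ j, 0 < lams j) (hG : ∀ j, 0 < G j) (α : ℝ) (hα : α ∈ Set.Ioo (0 : ℝ) 1)
    (ψ : (Fin L → ℝ) → ℝ) (hmeas : Measurable ψ) (hrange : ∀ w, ψ w ∈ Set.Icc (0 : ℝ) 1)
    (hsize : ∫ w, ψ w ∂ nuMeas lams G 0 ≤ α) :
    ∀ h : ℝ, h < 0 →
      ∫ w, ψ w ∂ nuMeas lams G h ≤ 1 - (1 - α) * exp (h / (∑ j, G j / lams j)⁻¹) := by
  intro h hneg
  haveI hP0 : IsProbabilityMeasure (nuMeas lams G 0) := nuMeas_prob _ _ hlams 0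
  haveI hPh : IsProbabilityMeasure (nuMeas lams G h) := nuMeas_prob _ _ hlams h
  haveI : Nonempty (Fin L) := Fin.pos_iff_nonempty.mp hL
  have hS : 0 < ∑ j, G j / lams j :=
    Finset.sum_pos (fun j _ => div_pos (hG j) (hlams j)) Finset.univ_nonempty
  have hexp : h / (∑ j, G j / lams j)⁻¹ = h * ∑ j, G j / lams j := by rw [div_eq_mul_inv, inv_inv]
  rw [hexp]
  set c := exp (h * ∑ j, G j / lams j) with hc
  have hc0 : (0 : ℝ) < c := exp_pos _
  have hint : ∀ h' : ℝ, Integrable ψ (nuMeas lams G h') := by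
    intro h'
    haveI := nuMeas_prob lams G hlams h'
    refine (integrable_const (1 : ℝ)).mono' hmeas.aestronglyMeasurable ?_
    refine ae_of_all _ fun w => ?_
    have := hrange w
    rw [Real.norm_eq_abs, abs_of_nonneg this.1]
    exact this.2
  set g : (Fin L → ℝ) → ℝ := fun w => 1 - ψ w with hg
  have hgmeas : Measurable g := measurable_const.sub hmeas
  have hgnn : ∀ w, 0 ≤ g w := fun w => by
    have := hrange w
    simp only [hg]
    linarith [this.2]
  have hg_int : ∀ h', Integrable g (nuMeas lams G h') := fun h' => by
    haveI := nuMeas_prob lams G hlams h'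
    exact (integrable_const 1).sub (hint h')
  have lint_eq : ∀ h', ∫⁻ w, ENNReal.ofReal (g w) ∂nuMeas lams G h'
      = ENNReal.ofReal (∫ w, g w ∂nuMeas lams G h') := fun h' =>
    (ofReal_integral_eq_lintegral_ofReal (hg_int h') (ae_of_all _ hgnn)).symm
  have hF : ∀ h', Measurable fun x : Fin L → ℝ => ∏ j, expDens (lams j) (G j * h') (x j) :=
    fun h' => Finset.measurable_prod _ fun j _ =>
      (expDens_measurable _ _).comp (measurable_pi_apply j)
  have hq : Measurable fun w => ENNReal.ofReal (g w) := hgmeas.ennreal_ofReal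
  have key : ENNReal.ofReal c * ∫⁻ w, ENNReal.ofReal (g w) ∂nuMeas lams G 0
      ≤ ∫⁻ w, ENNReal.ofReal (g w) ∂nuMeas lams G h := by
    rw [nuMeas_eq lams G hlams 0, nuMeas_eq lams G hlams h,
      lintegral_withDensity_eq_lintegral_mul _ (hF 0) hq,
      lintegral_withDensity_eq_lintegral_mul _ (hF h) hq]
    simp only [Pi.mul_apply]
    rw [← lintegral_const_mul (f := fun x => (∏ j, expDens (lams j) (G j * 0) (x j)) * ENNReal.ofReal (g x)) _ ((hF 0).mul hq)]
    refine lintegral_mono fun x => ?_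
    rw [← mul_assoc]
    refine mul_le_mul_left ?_ _
    have := prod_factor lams G hlams hG h hneg x
    simpa only [mul_zero] using this
  have Ih : c * ∫ w, g w ∂nuMeas lams G 0 ≤ ∫ w, g w ∂nuMeas lams G h := by
    rw [lint_eq 0, lint_eq h, ← ENNReal.ofReal_mul hc0.le] at key
    exact (ENNReal.ofReal_le_ofReal_iff (integral_nonneg hgnn)).mp key
  have e0 : ∫ w, g w ∂nuMeas lams G 0 = 1 - ∫ w, ψ w ∂nuMeas lams G 0 := by
    rw [hg, integral_sub (integrable_const 1) (hint 0), integral_const]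
    simp
  have eh : ∫ w, g w ∂nuMeas lams G h = 1 - ∫ w, ψ w ∂nuMeas lams G h := by
    rw [hg, integral_sub (integrable_const 1) (hint h), integral_const]
    simp
  rw [e0] at Ih
  rw [eh] at Ih
  nlinarith [hsize, hc0, Ih]
end
end
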